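/- Let f : ℝ² → ℝ be a polynomial of degree n ≥ 2 whose top-degree homogeneous part f_n has nonvanishing gradient at (cos A, sin A) for a given angle A. Then the squared difference of the principal curvatures of the graph z = f(x,y), namely Δ²(x,y) = [((1+f_y²)·f_xx − 2·f_x·f_y·f_xy + (1+f_x²)·f_yy)² − 4·(1+f_x²+f_y²)·(f_xx·f_yy − f_xy²)] / (1+f_x²+f_y²)³, tends to 0 as R → ∞ along the ray (x,y) = (R·cos A, R·sin A). -/
import Mathlib


open MvPolynomial Real Filter

/-- Evaluate a bivariate polynomial at `(x, y)`. -/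
noncomputable def ev (p : MvPolynomial (Fin 2) ℝ) (x y : ℝ) : ℝ :=
  eval ![x, y] p

/-- Formal partial derivative in the first variable. -/
noncomputable def Dx (p : MvPolynomial (Fin 2) ℝ) : MvPolynomial (Fin 2) ℝ :=
  pderiv (0 : Fin 2) p

/-- Formal partial derivative in the second variable. -/
noncomputable def Dy (p : MvPolynomial (Fin 2) ℝ) : MvPolynomial (Fin 2) ℝ :=
  pderiv (1 : Fin 2) p

/-- The square `(κ₁ − κ₂)²` of the difference of the principal curvatures of the
graph `z = f(x,y)` at `(x,y)`, for `f` the polynomial function determined by `p`. -/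
noncomputable def Delta2 (p : MvPolynomial (Fin 2) ℝ) (x y : ℝ) : ℝ :=
  (((1 + ev (Dy p) x y ^ 2) * ev (Dx (Dx p)) x y
      - 2 * ev (Dx p) x y * ev (Dy p) x y * ev (Dy (Dx p)) x y
      + (1 + ev (Dx p) x y ^ 2) * ev (Dy (Dy p)) x y) ^ 2
    - 4 * (1 + ev (Dx p) x y ^ 2 + ev (Dy p) x y ^ 2)
        * (ev (Dx (Dx p)) x y * ev (Dy (Dy p)) x y - ev (Dy (Dx p)) x y ^ 2))
  / (1 + ev (Dx p) x y ^ 2 + ev (Dy p) x y ^ 2) ^ 3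

/-- `W = √(1 + f_x² + f_y²)`. -/
noncomputable def Wgr (p : MvPolynomial (Fin 2) ℝ) (x y : ℝ) : ℝ :=
  Real.sqrt (1 + ev (Dx p) x y ^ 2 + ev (Dy p) x y ^ 2)

/-- The distance to infinity `d = 1 − √((W−1)/(W+1)) = 1 − |ξ|` of the point `(x,y)`
under the Gauss map of the graph `z = f(x,y)`. -/
noncomputable def dInf (p : MvPolynomial (Fin 2) ℝ) (x y : ℝ) : ℝ :=
  1 - Real.sqrt ((Wgr p x y - 1) / (Wgr p x y + 1))

noncomputable def toUni (c s : ℝ) : MvPolynomial (Fin 2) ℝ →ₐ[ℝ] Polynomial ℝ :=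
  aeval ![Polynomial.C c * Polynomial.X, Polynomial.C s * Polynomial.X]

lemma hdeg2 (d : Fin 2 →₀ ℕ) : d.degree = d 0 + d 1 := by
  have : d.degree = ∑ i : Fin 2, d i := by
    rw [Finsupp.degree]
    exact Finset.sum_subset (Finset.subset_univ _)
      (fun i _ hi => by simpa using Finsupp.notMem_support_iff.mp hi)
  rw [this, Fin.sum_univ_two]

lemma hcm (k : ℕ) (d : Fin 2 →₀ ℕ) (a : ℝ) :
    homogeneousComponent k (monomial d a)
      = if d.degree = k then monomial d a else 0 := by
  ext e
  rw [coeff_homogeneousComponent]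
  by_cases hde : d = e
  · subst hde
    split_ifs with h1 h2 h2 <;> simp_all [coeff_monomial]
  · split_ifs <;> simp [coeff_monomial, hde]

lemma toUni_monomial (c s : ℝ) (d : Fin 2 →₀ ℕ) (a : ℝ) :
    toUni c s (monomial d a)
      = Polynomial.C (a * c ^ d 0 * s ^ d 1) * Polynomial.X ^ (d 0 + d 1) := by
  rw [toUni, aeval_monomial]
  rw [Finsupp.prod_fintype _ _ (fun i => pow_zero _), Fin.prod_univ_two]
  simp only [Matrix.cons_val_zero, Matrix.cons_val_one, Matrix.head_cons,
    Polynomial.algebraMap_eq]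
  rw [mul_pow, mul_pow, ← Polynomial.C_pow, ← Polynomial.C_pow,
    show ∀ u v w x y : Polynomial ℝ, u * (v * w * (x * y)) = u * v * x * (w * y) from
      fun _ _ _ _ _ => by ring,
    ← Polynomial.C_mul, ← Polynomial.C_mul, ← pow_add]

lemma coeff_toUni (c s : ℝ) (q : MvPolynomial (Fin 2) ℝ) (k : ℕ) :
    (toUni c s q).coeff k = ev (homogeneousComponent k q) c s := by
  conv_lhs => rw [q.as_sum]
  conv_rhs => rw [q.as_sum]
  rw [map_sum, Polynomial.finset_sum_coeff, ev, map_sum, map_sum]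
  refine Finset.sum_congr rfl fun d _ => ?_
  rw [toUni_monomial, hcm, Polynomial.coeff_C_mul, Polynomial.coeff_X_pow, ← hdeg2]
  split_ifs with h1 h2 h2
  · rw [eval_monomial, Finsupp.prod_fintype _ _ (fun i => pow_zero _), Fin.prod_univ_two]
    simp [mul_assoc]
  · omega
  · omega
  · simp

lemma homComp_pderiv (i : Fin 2) (q : MvPolynomial (Fin 2) ℝ) (m : ℕ) :
    homogeneousComponent m (pderiv i q)
      = pderiv i (homogeneousComponent (m + 1) q) := by
  conv_lhs => rw [q.as_sum]
  conv_rhs => rw [q.as_sum]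
  rw [map_sum, map_sum, map_sum, map_sum]
  refine Finset.sum_congr rfl fun d _ => ?_
  rw [pderiv_monomial, hcm, hcm]
  by_cases hdi : d i = 0
  · split_ifs <;> simp [hdi]
  · have hd1 : (d - Finsupp.single i 1).degree = d.degree - 1 := by
      have hi : i = 0 ∨ i = 1 := by fin_cases i <;> simp
      rcases hi with rfl | rfl <;>
        (rw [hdeg2, hdeg2, Finsupp.tsub_apply, Finsupp.tsub_apply]
         simp [Finsupp.single_apply]
         omega)
    have hdpos : 1 ≤ d.degree := le_trans (by omega) (Finsupp.le_degree i d)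
    rw [hd1]
    by_cases h : d.degree = m + 1
    · rw [if_pos (by omega), if_pos h, pderiv_monomial]
    · rw [if_neg (by omega), if_neg h, map_zero]

lemma eval_toUni (c s R : ℝ) (q : MvPolynomial (Fin 2) ℝ) :
    Polynomial.eval R (toUni c s q) = ev q (R * c) (R * s) := by
  induction q using MvPolynomial.induction_on with
  | C a => simp [toUni, ev]
  | add p q hp hq => simp only [map_add, Polynomial.eval_add, hp, hq]; simp [ev]
  | mul_X q i h =>
      rw [map_mul, Polynomial.eval_mul, h]
      have h1 : ev (q * X i) (R*c) (R*s) = ev q (R*c) (R*s) * eval ![R*c, R*s] (X i) := by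
        simp [ev]
      rw [h1]
      congr 1
      fin_cases i <;> (simp [toUni]; try ring)

lemma coeff_toUni_pderiv (c s : ℝ) (q : MvPolynomial (Fin 2) ℝ) (i : Fin 2) (m : ℕ) :
    (toUni c s (pderiv i q)).coeff m
      = ev (pderiv i (homogeneousComponent (m + 1) q)) c s := by
  rw [coeff_toUni, homComp_pderiv]

lemma natDegree_toUni_pderiv_le (c s : ℝ) (q : MvPolynomial (Fin 2) ℝ) {n : ℕ}
    (h : q.totalDegree ≤ n) (i : Fin 2) :
    (toUni c s (pderiv i q)).natDegree ≤ n - 1 := by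
  rw [Polynomial.natDegree_le_iff_coeff_eq_zero]
  intro k hk
  rw [coeff_toUni_pderiv,
    homogeneousComponent_eq_zero (k+1) q (by omega), map_zero]
  simp [ev]

lemma natDegree_toUni_pderiv2_le (c s : ℝ) (q : MvPolynomial (Fin 2) ℝ) {n : ℕ}
    (h : q.totalDegree ≤ n) (i j : Fin 2) :
    (toUni c s (pderiv j (pderiv i q))).natDegree ≤ n - 2 := by
  rw [Polynomial.natDegree_le_iff_coeff_eq_zero]
  intro k hk
  rw [coeff_toUni_pderiv, homComp_pderiv,
    homogeneousComponent_eq_zero (k+1+1) q (by omega), map_zero, map_zero]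
  simp [ev]

noncomputable def Dpoly (p : MvPolynomial (Fin 2) ℝ) (c s : ℝ) : Polynomial ℝ :=
  1 + (toUni c s (Dx p)) ^ 2 + (toUni c s (Dy p)) ^ 2

noncomputable def Npoly (p : MvPolynomial (Fin 2) ℝ) (c s : ℝ) : Polynomial ℝ :=
  ((1 + (toUni c s (Dy p)) ^ 2) * toUni c s (Dx (Dx p))
      - 2 * toUni c s (Dx p) * toUni c s (Dy p) * toUni c s (Dy (Dx p))
      + (1 + (toUni c s (Dx p)) ^ 2) * toUni c s (Dy (Dy p))) ^ 2
    - 4 * Dpoly p c s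
        * (toUni c s (Dx (Dx p)) * toUni c s (Dy (Dy p)) - (toUni c s (Dy (Dx p))) ^ 2)

lemma delta2_eq (p : MvPolynomial (Fin 2) ℝ) (c s R : ℝ) :
    Delta2 p (R * c) (R * s)
      = Polynomial.eval R (Npoly p c s) / Polynomial.eval R (Dpoly p c s ^ 3) := by
  simp only [Delta2, Npoly, Dpoly, Polynomial.eval_pow, Polynomial.eval_sub,
    Polynomial.eval_add, Polynomial.eval_mul, Polynomial.eval_one,
    Polynomial.eval_ofNat, eval_toUni]

/-- If the top-degree homogeneous part of a polynomial `f` of degree `n ≥ 2` has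
nonvanishing gradient at `(cos A, sin A)`, then `(κ₁ − κ₂)² → 0` along the ray
`(R·cos A, R·sin A)` as `R → ∞`. -/
theorem curvature_diff_tendsto_zero_along_ray (p : MvPolynomial (Fin 2) ℝ) (n : ℕ)
    (hn : 2 ≤ n) (hdeg : p.totalDegree = n) (A : ℝ)
    (hgrad : (ev (Dx (homogeneousComponent n p)) (Real.cos A) (Real.sin A),
              ev (Dy (homogeneousComponent n p)) (Real.cos A) (Real.sin A)) ≠ (0, 0)) :
    Tendsto (fun R : ℝ => Delta2 p (R * Real.cos A) (R * Real.sin A))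
      atTop (nhds 0) := by
  set c := Real.cos A with hc
  set s := Real.sin A with hs
  set a := ev (Dx (homogeneousComponent n p)) c s with ha
  set b := ev (Dy (homogeneousComponent n p)) c s with hb
  have hab : a ≠ 0 ∨ b ≠ 0 := by
    by_contra hcon
    push_neg at hcon
    exact hgrad (by rw [hcon.1, hcon.2])
  have hab2 : a ^ 2 + b ^ 2 ≠ 0 := by
    have : 0 < a ^ 2 + b ^ 2 := by rcases hab with h | h <;> positivity
    exact this.ne'
  have htd : p.totalDegree ≤ n := hdeg.le
  have hP1d : (toUni c s (Dx p)).natDegree ≤ n - 1 := natDegree_toUni_pderiv_le c s p htd 0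
  have hP2d : (toUni c s (Dy p)).natDegree ≤ n - 1 := natDegree_toUni_pderiv_le c s p htd 1
  have hQ11 : (toUni c s (Dx (Dx p))).natDegree ≤ n - 2 :=
    natDegree_toUni_pderiv2_le c s p htd 0 0
  have hQ12 : (toUni c s (Dy (Dx p))).natDegree ≤ n - 2 :=
    natDegree_toUni_pderiv2_le c s p htd 0 1
  have hQ22 : (toUni c s (Dy (Dy p))).natDegree ≤ n - 2 :=
    natDegree_toUni_pderiv2_le c s p htd 1 1
  have hn1 : n - 1 + 1 = n := by omega
  have hP1c : (toUni c s (Dx p)).coeff (n - 1) = a := by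
    rw [Dx, coeff_toUni_pderiv, hn1, ha]; rfl
  have hP2c : (toUni c s (Dy p)).coeff (n - 1) = b := by
    rw [Dy, coeff_toUni_pderiv, hn1, hb]; rfl
  have h1nd : (1 : Polynomial ℝ).natDegree ≤ 0 := by simp
  have h2nd : (2 : Polynomial ℝ).natDegree ≤ 0 := by simp
  have hDdeg_le : (Dpoly p c s).natDegree ≤ 2 * n - 2 := by
    unfold Dpoly
    refine le_trans (Polynomial.natDegree_add_le_of_le
      (Polynomial.natDegree_add_le_of_le h1nd
        (Polynomial.natDegree_pow_le_of_le 2 hP1d))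
      (Polynomial.natDegree_pow_le_of_le 2 hP2d)) (by omega)
  have hDc : (Dpoly p c s).coeff (2 * n - 2) = a ^ 2 + b ^ 2 := by
    have hone : (1 : Polynomial ℝ).coeff (2 * n - 2) = 0 := by
      rw [Polynomial.coeff_one]
      exact if_neg (by omega)
    unfold Dpoly
    rw [Polynomial.coeff_add, Polynomial.coeff_add, hone,
      sq (toUni c s (Dx p)), sq (toUni c s (Dy p)),
      show 2 * n - 2 = (n - 1) + (n - 1) from by omega,
      Polynomial.coeff_mul_add_eq_of_natDegree_le hP1d hP1d,
      Polynomial.coeff_mul_add_eq_of_natDegree_le hP2d hP2d, hP1c, hP2c]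
    ring
  have hDne : Dpoly p c s ≠ 0 := fun h => hab2 (by rw [← hDc, h, Polynomial.coeff_zero])
  have hDnat : (Dpoly p c s).natDegree = 2 * n - 2 :=
    le_antisymm hDdeg_le (Polynomial.le_natDegree_of_ne_zero (by rw [hDc]; exact hab2))
  have hI : ((1 + (toUni c s (Dy p)) ^ 2) * toUni c s (Dx (Dx p))
      - 2 * toUni c s (Dx p) * toUni c s (Dy p) * toUni c s (Dy (Dx p))
      + (1 + (toUni c s (Dx p)) ^ 2) * toUni c s (Dy (Dy p))).natDegree ≤ 3 * n - 4 := by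
    have t1 : ((1 + (toUni c s (Dy p)) ^ 2) * toUni c s (Dx (Dx p))).natDegree ≤ 3 * n - 4 :=
      le_trans (Polynomial.natDegree_mul_le_of_le
        (Polynomial.natDegree_add_le_of_le h1nd (Polynomial.natDegree_pow_le_of_le 2 hP2d))
        hQ11) (by omega)
    have t2 : ((2 : Polynomial ℝ) * toUni c s (Dx p) * toUni c s (Dy p)
        * toUni c s (Dy (Dx p))).natDegree ≤ 3 * n - 4 :=
      le_trans (Polynomial.natDegree_mul_le_of_le
        (Polynomial.natDegree_mul_le_of_le
          (Polynomial.natDegree_mul_le_of_le h2nd hP1d) hP2d) hQ12) (by omega)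
    have t3 : ((1 + (toUni c s (Dx p)) ^ 2) * toUni c s (Dy (Dy p))).natDegree ≤ 3 * n - 4 :=
      le_trans (Polynomial.natDegree_mul_le_of_le
        (Polynomial.natDegree_add_le_of_le h1nd (Polynomial.natDegree_pow_le_of_le 2 hP1d))
        hQ22) (by omega)
    exact le_trans (Polynomial.natDegree_add_le_of_le
      (Polynomial.natDegree_sub_le_of_le t1 t2) t3) (by omega)
  have hNd : (Npoly p c s).natDegree ≤ 6 * n - 8 := by
    unfold Npoly
    have h4nd : (4 : Polynomial ℝ).natDegree ≤ 0 := by simp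
    have t5 : ((4 : Polynomial ℝ) * Dpoly p c s
        * (toUni c s (Dx (Dx p)) * toUni c s (Dy (Dy p))
          - (toUni c s (Dy (Dx p))) ^ 2)).natDegree ≤ 6 * n - 8 :=
      le_trans (Polynomial.natDegree_mul_le_of_le
        (Polynomial.natDegree_mul_le_of_le h4nd hDdeg_le)
        (Polynomial.natDegree_sub_le_of_le
          (Polynomial.natDegree_mul_le_of_le hQ11 hQ22)
          (Polynomial.natDegree_pow_le_of_le 2 hQ12))) (by omega)
    exact le_trans (Polynomial.natDegree_sub_le_of_le
      (Polynomial.natDegree_pow_le_of_le 2 hI) t5) (by omega)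
  have hD3ne : Dpoly p c s ^ 3 ≠ 0 := pow_ne_zero _ hDne
  have hdlt : (Npoly p c s).degree < (Dpoly p c s ^ 3).degree := by
    have h2 : (Dpoly p c s ^ 3).natDegree = 6 * n - 6 := by
      rw [Polynomial.natDegree_pow, hDnat]; omega
    rw [Polynomial.degree_eq_natDegree hD3ne, h2]
    refine lt_of_le_of_lt (Polynomial.degree_le_of_natDegree_le hNd) ?_
    exact_mod_cast (by omega : 6 * n - 8 < 6 * n - 6)
  have key := Polynomial.div_tendsto_zero_of_degree_lt (Npoly p c s) (Dpoly p c s ^ 3) hdlt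
  exact key.congr fun R => (delta2_eq p c s R).symm
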